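/- Let A be an odd positive definite unimodular integral lattice of rank 24 with no vectors of norm 1, and let h₁ ≤ h₂ be the Coxeter numbers of its two even neighbors. Then h₂ ≤ 2h₁ + 2. -/

import Mathlib

open Matrix
open scoped Classical

/-- The `ℚ`-bilinear extension of the integral bilinear form with Gram matrix
`M` to `L ⊗ ℚ = (Fin n → ℚ)`. -/
def qformQ {n : ℕ} (M : Matrix (Fin n) (Fin n) ℤ) (x y : Fin n → ℚ) : ℚ :=
  x ⬝ᵥ (M.map (fun a => (a : ℚ))).mulVec y

/-- `B` is an even neighbor of the odd unimodular lattice with Gram matrix `M`: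
an even unimodular lattice (inside `L ⊗ ℚ`) containing the even sublattice
`L₀ = {x ∈ L : ⟨x,x⟩ even}`. -/
def IsEvenNeighbor {n : ℕ} (M : Matrix (Fin n) (Fin n) ℤ)
    (B : Submodule ℤ (Fin n → ℚ)) : Prop :=
  (∀ z : Fin n → ℤ, (2 : ℤ) ∣ z ⬝ᵥ M.mulVec z → (fun i => (z i : ℚ)) ∈ B) ∧
  (∀ x ∈ B, ∀ y ∈ B, ∃ k : ℤ, qformQ M x y = k) ∧
  (∀ x ∈ B, ∃ k : ℤ, qformQ M x x = 2 * k) ∧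
  (∃ b : Module.Basis (Fin n) ℤ B,
    (Matrix.of fun i j => qformQ M ((b i : Fin n → ℚ)) ((b j : Fin n → ℚ))).det = 1)

namespace NbrAux

variable {n : ℕ}

/-- cast of an integer vector -/
def cv (z : Fin n → ℤ) : Fin n → ℚ := fun i => (z i : ℚ)

lemma cv_inj {z w : Fin n → ℤ} (h : cv z = cv w) : z = w := by
  funext i
  have : (z i : ℚ) = (w i : ℚ) := congrFun h i
  exact_mod_cast this

lemma cv_add (z w : Fin n → ℤ) : cv (z + w) = cv z + cv w := by
  funext i; simp [cv]

lemma cv_sub (z w : Fin n → ℤ) : cv (z - w) = cv z - cv w := by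
  funext i; simp [cv]

lemma cv_neg (z : Fin n → ℤ) : cv (-z) = - cv z := by
  funext i; simp [cv]

section Form

variable (M : Matrix (Fin n) (Fin n) ℤ)

lemma q_cast (z w : Fin n → ℤ) :
    qformQ M (cv z) (cv w) = ((z ⬝ᵥ M.mulVec w : ℤ) : ℚ) := by
  simp [qformQ, cv, dotProduct, Matrix.mulVec, Matrix.map_apply, Finset.mul_sum]

lemma q_add_left (x y z : Fin n → ℚ) :
    qformQ M (x + y) z = qformQ M x z + qformQ M y z := by
  simp [qformQ, add_dotProduct]

lemma q_add_right (x y z : Fin n → ℚ) :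
    qformQ M x (y + z) = qformQ M x y + qformQ M x z := by
  simp [qformQ, Matrix.mulVec_add, dotProduct_add]

lemma q_neg_left (x z : Fin n → ℚ) : qformQ M (-x) z = - qformQ M x z := by
  simp [qformQ, neg_dotProduct]

lemma q_neg_right (x z : Fin n → ℚ) : qformQ M x (-z) = - qformQ M x z := by
  simp [qformQ, Matrix.mulVec_neg, dotProduct_neg]

lemma q_sub_left (x y z : Fin n → ℚ) :
    qformQ M (x - y) z = qformQ M x z - qformQ M y z := by
  simp [qformQ, sub_dotProduct]

lemma q_sub_right (x y z : Fin n → ℚ) :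
    qformQ M x (y - z) = qformQ M x y - qformQ M x z := by
  simp [qformQ, Matrix.mulVec_sub, dotProduct_sub]

lemma q_smul_left (c : ℚ) (x z : Fin n → ℚ) :
    qformQ M (c • x) z = c * qformQ M x z := by
  simp [qformQ, smul_dotProduct]

lemma q_smul_right (c : ℚ) (x z : Fin n → ℚ) :
    qformQ M x (c • z) = c * qformQ M x z := by
  simp [qformQ, Matrix.mulVec_smul, dotProduct_smul]

lemma q_symm (hsymm : M.IsSymm) (x y : Fin n → ℚ) :
    qformQ M x y = qformQ M y x := by
  have hT : (M.map (fun a => (a : ℚ)))ᵀ = (M.map (fun a => (a : ℚ))) := by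
    rw [← Matrix.transpose_map]
    rw [hsymm]
  unfold qformQ
  rw [Matrix.dotProduct_mulVec, ← Matrix.vecMul_transpose, hT, dotProduct_comm]

end Form

theorem diag2 {n : ℕ} (S : Matrix (Fin n) (Fin n) (ZMod 2)) (hS : Sᵀ = S) (z : Fin n → ZMod 2) :
    z ⬝ᵥ S.mulVec z = ∑ i, S i i * z i := by
  classical
  have expand : z ⬝ᵥ S.mulVec z = ∑ p ∈ Finset.univ ×ˢ Finset.univ,
      z p.1 * S p.1 p.2 * z p.2 := by
    rw [Finset.sum_product]
    simp [dotProduct, Matrix.mulVec, Finset.mul_sum, mul_assoc]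
  rw [expand]
  rw [← Finset.sum_filter_add_sum_filter_not (Finset.univ ×ˢ Finset.univ)
    (fun p : Fin n × Fin n => p.1 = p.2) (fun p => z p.1 * S p.1 p.2 * z p.2)]
  have h2 : ∑ p ∈ (Finset.univ ×ˢ Finset.univ).filter (fun p : Fin n × Fin n => ¬ p.1 = p.2),
      z p.1 * S p.1 p.2 * z p.2 = 0 := by
    have gmem : ∀ p : Fin n × Fin n, p ∈ (Finset.univ ×ˢ Finset.univ).filter
        (fun p : Fin n × Fin n => ¬ p.1 = p.2) → p.swap ∈ (Finset.univ ×ˢ Finset.univ).filter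
        (fun p : Fin n × Fin n => ¬ p.1 = p.2) := by
      intro p hp
      simp only [Finset.mem_filter, Finset.mem_product, Finset.mem_univ, true_and,
        Prod.fst_swap, Prod.snd_swap] at hp ⊢
      exact fun h => hp h.symm
    apply Finset.sum_involution (fun p _ => p.swap) ?_ ?_ (fun p hp => gmem p hp)
        (fun p _ => Prod.swap_swap p)
    · intro p hp
      have hsym : S p.2 p.1 = S p.1 p.2 := by
        conv_lhs => rw [← hS]
        rfl
      have h22 : ∀ a : ZMod 2, a + a = 0 := by decide
      simp only [Prod.fst_swap, Prod.snd_swap, hsym]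
      rw [show z p.2 * S p.1 p.2 * z p.1 = z p.1 * S p.1 p.2 * z p.2 by ring]
      exact h22 _
    · intro p hp _
      simp only [Finset.mem_filter] at hp
      intro hc
      have : p.2 = p.1 := congrArg Prod.fst hc
      exact hp.2 this.symm
  rw [h2, add_zero]
  rw [Finset.sum_filter, Finset.sum_product]
  simp only [Finset.sum_ite_eq, Finset.mem_univ, if_true]
  apply Finset.sum_congr rfl
  intro i _
  have hz : z i * z i = z i := by
    have h22 : ∀ a : ZMod 2, a * a = a := by decide
    exact h22 _
  rw [show z i * S i i * z i = S i i * (z i * z i) by ring, hz]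

theorem func2 {n : ℕ} (d g : Fin n → ZMod 2)
    (h : ∀ z : Fin n → ZMod 2, d ⬝ᵥ z = 0 → g ⬝ᵥ z = 0) : g = 0 ∨ g = d := by
  classical
  by_cases hd : d = 0
  · left
    funext i
    have := h (Pi.single i 1) (by simp [hd])
    simpa [dotProduct_single] using this
  · have hex : ∃ i₀, d i₀ ≠ 0 := by
      by_contra hc
      push_neg at hc
      exact hd (funext fun i => hc i)
    obtain ⟨i₀, hi₀⟩ := hex
    have hdi₀ : d i₀ = 1 := by
      have h01 : ∀ a : ZMod 2, a ≠ 0 → a = 1 := by decide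
      exact h01 _ hi₀
    have key : ∀ z : Fin n → ZMod 2, g ⬝ᵥ z = (d ⬝ᵥ z) * g i₀ := by
      intro z
      have hz' : d ⬝ᵥ (z - (d ⬝ᵥ z) • (Pi.single i₀ 1 : Fin n → ZMod 2)) = 0 := by
        simp [dotProduct_sub, dotProduct_smul, dotProduct_single, hdi₀]
      have h0 := h _ hz'
      simp only [dotProduct_sub, dotProduct_smul, dotProduct_single,
        sub_eq_zero, smul_eq_mul, mul_one] at h0
      rw [h0]
    by_cases hg : g i₀ = 0
    · left
      funext i
      have := key (Pi.single i 1)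
      simpa [dotProduct_single, hg] using this
    · right
      have hg1 : g i₀ = 1 := by
        have h01 : ∀ a : ZMod 2, a ≠ 0 → a = 1 := by decide
        exact h01 _ hg
      funext i
      have := key (Pi.single i 1)
      simpa [dotProduct_single, hg1] using this


section Neighbor
variable (M : Matrix (Fin n) (Fin n) ℤ) {B : Submodule ℤ (Fin n → ℚ)}

lemma dot_symm_int (hsymm : M.IsSymm) (z w : Fin n → ℤ) :
    z ⬝ᵥ M.mulVec w = w ⬝ᵥ M.mulVec z := by
  rw [Matrix.dotProduct_mulVec, ← Matrix.vecMul_transpose, hsymm, dotProduct_comm]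

lemma cv_single (j : Fin n) (c : ℤ) : cv (Pi.single j c) = Pi.single j (c : ℚ) := by
  funext i
  by_cases h : i = j
  · subst h; simp [cv]
  · simp [cv, Pi.single_apply, h]

lemma map_mul_int (A C : Matrix (Fin n) (Fin n) ℤ) :
    ((A * C).map (fun a : ℤ => (a : ℚ))) = A.map (fun a => (a:ℚ)) * C.map (fun a => (a:ℚ)) := by
  ext i j
  simp [Matrix.mul_apply, Matrix.map_apply]

lemma cv_mulVec (A : Matrix (Fin n) (Fin n) ℤ) (u : Fin n → ℤ) :
    (A.map (fun a => (a:ℚ))).mulVec (cv u) = cv (A.mulVec u) := by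
  funext i
  simp [Matrix.mulVec, dotProduct, Matrix.map_apply, cv]

lemma double_mem (hB : IsEvenNeighbor M B) (j : Fin n) : cv (Pi.single j 2) ∈ B := by
  apply hB.1
  refine ⟨M j j * 2, ?_⟩
  simp [Matrix.mulVec_single, dotProduct, Pi.single_apply, Finset.sum_ite_eq,
    Finset.mul_sum]

lemma two_smul_int (hsymm : M.IsSymm) (hdet : M.det = 1) (hB : IsEvenNeighbor M B)
    {x : Fin n → ℚ} (hx : x ∈ B) : ∃ w : Fin n → ℤ, (2:ℚ) • x = cv w := by
  classical
  have hcol : ∀ j, ∃ k : ℤ, qformQ M x (cv (Pi.single j 2)) = k :=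
    fun j => hB.2.1 x hx _ (double_mem M hB j)
  have hform : ∀ j, qformQ M x (cv (Pi.single j 2)) =
      2 * ((M.map (fun a => (a:ℚ))).mulVec x) j := by
    intro j
    rw [cv_single]
    unfold qformQ
    rw [Matrix.mulVec_single]
    have hsymmq : (M.map (fun a => (a:ℚ)))ᵀ = M.map (fun a => (a:ℚ)) := by
      rw [← Matrix.transpose_map, hsymm]
    simp only [dotProduct, Matrix.mulVec]
    rw [Finset.mul_sum]
    apply Finset.sum_congr rfl
    intro i _
    have hji : (M.map (fun a => (a:ℚ))) j i = (M.map (fun a => (a:ℚ))) i j := by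
      conv_lhs => rw [← hsymmq]
      rfl
    rw [hji]
    rw [Pi.smul_apply, Matrix.col_apply, op_smul_eq_mul]
    ring
  have hcol2 : ∀ j, ∃ k : ℤ, 2 * ((M.map (fun a => (a:ℚ))).mulVec x) j = (k:ℚ) := by
    intro j
    obtain ⟨k, hk⟩ := hcol j
    exact ⟨k, by rw [← hform j]; exact hk⟩
  choose u hu using hcol2
  -- now invert with the adjugate
  have hAM : M.adjugate * M = 1 := by
    rw [Matrix.adjugate_mul, hdet]
    simp
  have hAMq : (M.adjugate.map (fun a => (a:ℚ))) * (M.map (fun a => (a:ℚ))) = 1 := by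
    rw [← map_mul_int, hAM]
    ext i j
    by_cases h : i = j
    · subst h; simp
    · simp [Matrix.one_apply, h]
  refine ⟨M.adjugate.mulVec u, ?_⟩
  have hx2 : (2:ℚ) • x =
      (M.adjugate.map (fun a => (a:ℚ))).mulVec ((2:ℚ) • (M.map (fun a => (a:ℚ))).mulVec x) := by
    rw [Matrix.mulVec_smul, Matrix.mulVec_mulVec, hAMq, Matrix.one_mulVec]
  rw [hx2]
  have h2v : (2:ℚ) • (M.map (fun a => (a:ℚ))).mulVec x = cv u := by
    funext j
    have := hu j
    simpa [cv, Pi.smul_apply, smul_eq_mul] using this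
  rw [h2v, cv_mulVec]

lemma int_even (hB : IsEvenNeighbor M B) {z : Fin n → ℤ} (h : cv z ∈ B) :
    (2:ℤ) ∣ z ⬝ᵥ M.mulVec z := by
  obtain ⟨k, hk⟩ := hB.2.2.1 _ h
  rw [q_cast] at hk
  refine ⟨k, ?_⟩
  exact_mod_cast hk


/-- integrality predicate -/
def Intg {n : ℕ} (x : Fin n → ℚ) : Prop := ∃ z : Fin n → ℤ, x = cv z

lemma Intg_neg {n : ℕ} {x : Fin n → ℚ} (h : Intg x) : Intg (-x) := by
  obtain ⟨z, rfl⟩ := h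
  exact ⟨-z, (cv_neg z).symm⟩

lemma Intg_neg_iff {n : ℕ} {x : Fin n → ℚ} : Intg (-x) ↔ Intg x := by
  constructor
  · intro h
    have := Intg_neg h
    rwa [neg_neg] at this
  · exact Intg_neg

lemma Intg_sub {n : ℕ} {x y : Fin n → ℚ} (hx : Intg x) (hy : Intg y) : Intg (x - y) := by
  obtain ⟨z, rfl⟩ := hx
  obtain ⟨v, rfl⟩ := hy
  exact ⟨z - v, (cv_sub z v).symm⟩

/-- any element of B pairs half-integrally against integral vectors, and:
for a non-integral x = w/2 in B, M·w ≡ diag(M) mod 2. -/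
lemma pinned (hsymm : M.IsSymm) (hdet : M.det = 1) (hB : IsEvenNeighbor M B)
    {x : Fin n → ℚ} {w : Fin n → ℤ} (hx : x ∈ B) (hw : (2:ℚ) • x = cv w)
    (hodd : ¬ ∀ i, (2:ℤ) ∣ w i) :
    ∀ i, (((M.mulVec w) i : ℤ) : ZMod 2) = ((M i i : ℤ) : ZMod 2) := by
  classical
  have step1 : ∀ z : Fin n → ℤ, (2:ℤ) ∣ z ⬝ᵥ M.mulVec z →
      (2:ℤ) ∣ w ⬝ᵥ M.mulVec z := by
    intro z hz
    have hzB : cv z ∈ B := hB.1 z hz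
    obtain ⟨k, hk⟩ := hB.2.1 x hx _ hzB
    have h2 : qformQ M (cv w) (cv z) = 2 * k := by
      rw [← hw, q_smul_left, hk]
    rw [q_cast] at h2
    refine ⟨k, ?_⟩
    exact_mod_cast h2
  -- move to ZMod 2
  set d : Fin n → ZMod 2 := fun i => ((M i i : ℤ) : ZMod 2) with hd
  set g : Fin n → ZMod 2 := fun i => (((M.mulVec w) i : ℤ) : ZMod 2) with hg
  have hdotcast : ∀ (a b : Fin n → ℤ), ((a ⬝ᵥ b : ℤ) : ZMod 2) =
      (fun i => ((a i : ℤ) : ZMod 2)) ⬝ᵥ (fun i => ((b i : ℤ) : ZMod 2)) := by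
    intro a b
    simp [dotProduct]
  have hdiag : ∀ z : Fin n → ℤ, ((z ⬝ᵥ M.mulVec z : ℤ) : ZMod 2) =
      d ⬝ᵥ (fun i => ((z i : ℤ) : ZMod 2)) := by
    intro z
    have hcast : ((z ⬝ᵥ M.mulVec z : ℤ) : ZMod 2) =
        (fun i => ((z i : ℤ) : ZMod 2)) ⬝ᵥ
          (M.map (fun a : ℤ => ((a : ℤ) : ZMod 2))).mulVec (fun i => ((z i : ℤ) : ZMod 2)) := by
      simp [dotProduct, Matrix.mulVec, Matrix.map_apply, Finset.mul_sum]
    rw [hcast, diag2]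
    · simp [dotProduct, Matrix.map_apply, hd]
    · rw [← Matrix.transpose_map, hsymm]
  have hvanish : ∀ ζ : Fin n → ZMod 2, d ⬝ᵥ ζ = 0 → g ⬝ᵥ ζ = 0 := by
    intro ζ hζ
    set z : Fin n → ℤ := fun i => ((ζ i).val : ℤ) with hz
    have hzc : (fun i => ((z i : ℤ) : ZMod 2)) = ζ := by
      funext i
      simp [hz, ZMod.intCast_cast]
    have hdz : ((z ⬝ᵥ M.mulVec z : ℤ) : ZMod 2) = 0 := by
      rw [hdiag, hzc]; exact hζ
    have hdvd : (2:ℤ) ∣ z ⬝ᵥ M.mulVec z :=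
      (ZMod.intCast_zmod_eq_zero_iff_dvd _ 2).mp hdz
    have hwz : (2:ℤ) ∣ w ⬝ᵥ M.mulVec z := step1 z hdvd
    have hwz0 : ((w ⬝ᵥ M.mulVec z : ℤ) : ZMod 2) = 0 :=
      (ZMod.intCast_zmod_eq_zero_iff_dvd _ 2).mpr hwz
    have hsw : w ⬝ᵥ M.mulVec z = z ⬝ᵥ M.mulVec w := dot_symm_int M hsymm w z
    rw [hsw] at hwz0
    have : ((z ⬝ᵥ M.mulVec w : ℤ) : ZMod 2) = ζ ⬝ᵥ g := by
      rw [hdotcast, hzc]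
    rw [this] at hwz0
    rw [dotProduct_comm]
    exact hwz0
  rcases func2 d g hvanish with h0 | h1
  · exfalso
    apply hodd
    intro i
    have hMw : ∀ j, (2:ℤ) ∣ (M.mulVec w) j := by
      intro j
      have : g j = 0 := congrFun h0 j
      exact (ZMod.intCast_zmod_eq_zero_iff_dvd _ 2).mp this
    have hAM : M.adjugate * M = 1 := by
      rw [Matrix.adjugate_mul, hdet]; simp
    have hwid : w = M.adjugate.mulVec (M.mulVec w) := by
      rw [Matrix.mulVec_mulVec, hAM, Matrix.one_mulVec]
    have : w i = ∑ j, M.adjugate i j * (M.mulVec w) j := by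
      conv_lhs => rw [hwid]
      rfl
    rw [this]
    exact Finset.dvd_sum (fun j _ => Dvd.dvd.mul_left (hMw j) _)
  · intro i
    exact congrFun h1 i

lemma odd_diff_int (hsymm : M.IsSymm) (hdet : M.det = 1) (hB : IsEvenNeighbor M B)
    {x y : Fin n → ℚ} {w w' : Fin n → ℤ} (hx : x ∈ B) (hy : y ∈ B)
    (hw : (2:ℚ) • x = cv w) (hw' : (2:ℚ) • y = cv w')
    (hox : ¬ ∀ i, (2:ℤ) ∣ w i) (hoy : ¬ ∀ i, (2:ℤ) ∣ w' i) :
    ∃ v : Fin n → ℤ, x - y = cv v := by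
  classical
  have hpx := pinned M hsymm hdet hB hx hw hox
  have hpy := pinned M hsymm hdet hB hy hw' hoy
  have hMv : ∀ j, (2:ℤ) ∣ (M.mulVec (w - w')) j := by
    intro j
    rw [Matrix.mulVec_sub]
    have : (((M.mulVec w) j - (M.mulVec w') j : ℤ) : ZMod 2) = 0 := by
      push_cast
      rw [hpx j, hpy j]
      ring
    exact (ZMod.intCast_zmod_eq_zero_iff_dvd _ 2).mp this
  have hAM : M.adjugate * M = 1 := by
    rw [Matrix.adjugate_mul, hdet]; simp
  have hvdvd : ∀ i, (2:ℤ) ∣ (w - w') i := by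
    intro i
    have hwid : w - w' = M.adjugate.mulVec (M.mulVec (w - w')) := by
      rw [Matrix.mulVec_mulVec, hAM, Matrix.one_mulVec]
    have : (w - w') i = ∑ j, M.adjugate i j * (M.mulVec (w - w')) j := by
      conv_lhs => rw [hwid]
      rfl
    rw [this]
    exact Finset.dvd_sum (fun j _ => Dvd.dvd.mul_left (hMv j) _)
  choose t ht using hvdvd
  refine ⟨t, ?_⟩
  have h2 : (2:ℚ) • (x - y) = (2:ℚ) • cv t := by
    rw [smul_sub, hw, hw']
    funext i
    have := ht i
    simp only [Pi.sub_apply] at this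
    simp only [cv, Pi.sub_apply, Pi.smul_apply, smul_eq_mul]
    have : ((w i : ℚ)) - (w' i : ℚ) = 2 * (t i : ℚ) := by
      exact_mod_cast this
    linarith
  exact smul_right_injective _ (by norm_num : (2:ℚ) ≠ 0) h2

lemma integral_iff {x : Fin n → ℚ} {w : Fin n → ℤ} (hw : (2:ℚ) • x = cv w) :
    (∃ z : Fin n → ℤ, x = cv z) ↔ ∀ i, (2:ℤ) ∣ w i := by
  classical
  constructor
  · rintro ⟨z, rfl⟩ i
    have : (2:ℚ) * (z i : ℚ) = (w i : ℚ) := congrFun hw i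
    have h2 : ((2 * z i : ℤ) : ℚ) = (w i : ℚ) := by push_cast; linarith
    exact ⟨z i, by exact_mod_cast h2.symm⟩
  · intro h
    choose t ht using h
    refine ⟨t, ?_⟩
    have h2 : (2:ℚ) • x = (2:ℚ) • cv t := by
      rw [hw]
      funext i
      simp only [cv, Pi.smul_apply, smul_eq_mul]
      have := ht i
      have : (w i : ℚ) = 2 * (t i : ℚ) := by exact_mod_cast this
      linarith
    exact smul_right_injective _ (by norm_num : (2:ℚ) ≠ 0) h2


lemma q_self_cast (hsymm : M.IsSymm) {x : Fin n → ℚ} {w : Fin n → ℤ}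
    (hw : (2:ℚ) • x = cv w) (y : Fin n → ℚ) {v : Fin n → ℤ} (hv : (2:ℚ) • y = cv v) :
    4 * qformQ M x y = ((w ⬝ᵥ M.mulVec v : ℤ) : ℚ) := by
  have : qformQ M ((2:ℚ) • x) ((2:ℚ) • y) = 4 * qformQ M x y := by
    rw [q_smul_left, q_smul_right]; ring
  rw [← this, hw, hv, q_cast]

lemma q_self_pos (hsymm : M.IsSymm) (hdet : M.det = 1)
    (hpos : ∀ z : Fin n → ℤ, z ≠ 0 → 0 < z ⬝ᵥ M.mulVec z)
    (hB : IsEvenNeighbor M B) {x : Fin n → ℚ} (hx : x ∈ B) (hx0 : x ≠ 0) :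
    0 < qformQ M x x := by
  obtain ⟨w, hw⟩ := two_smul_int M hsymm hdet hB hx
  have hw0 : w ≠ 0 := by
    intro h
    apply hx0
    rw [h] at hw
    have : (2:ℚ) • x = 0 := by
      rw [hw]; funext i; simp [cv]
    have := smul_eq_zero.mp this
    rcases this with h2 | h2
    · norm_num at h2
    · exact h2
  have h4 := q_self_cast M hsymm hw x hw
  have := hpos w hw0
  have hpos' : (0:ℚ) < ((w ⬝ᵥ M.mulVec w : ℤ) : ℚ) := by exact_mod_cast this
  linarith

lemma q_self_nonneg (hsymm : M.IsSymm) (hdet : M.det = 1)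
    (hpos : ∀ z : Fin n → ℤ, z ≠ 0 → 0 < z ⬝ᵥ M.mulVec z)
    (hB : IsEvenNeighbor M B) {x : Fin n → ℚ} (hx : x ∈ B) :
    0 ≤ qformQ M x x := by
  by_cases h : x = 0
  · subst h
    simp [qformQ]
  · exact le_of_lt (q_self_pos M hsymm hdet hpos hB hx h)

lemma q_self_zero (hsymm : M.IsSymm) (hdet : M.det = 1)
    (hpos : ∀ z : Fin n → ℤ, z ≠ 0 → 0 < z ⬝ᵥ M.mulVec z)
    (hB : IsEvenNeighbor M B) {x : Fin n → ℚ} (hx : x ∈ B)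
    (h : qformQ M x x = 0) : x = 0 := by
  by_contra hc
  have := q_self_pos M hsymm hdet hpos hB hx hc
  linarith

lemma roots_finite (hsymm : M.IsSymm) (hdet : M.det = 1)
    (hpos : ∀ z : Fin n → ℤ, z ≠ 0 → 0 < z ⬝ᵥ M.mulVec z)
    (hB : IsEvenNeighbor M B) :
    {x : Fin n → ℚ | x ∈ B ∧ qformQ M x x = 2}.Finite := by
  classical
  set A := M.adjugate with hA
  have hMA : M * A = 1 := by
    rw [hA, Matrix.mul_adjugate, hdet]; simp
  set u : Fin n → (Fin n → ℤ) := fun j => A.mulVec (Pi.single j 1) with hu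
  have hMu : ∀ j, M.mulVec (u j) = Pi.single j 1 := by
    intro j
    rw [hu]
    rw [Matrix.mulVec_mulVec, hMA, Matrix.one_mulVec]
  have hu0 : ∀ j, u j ≠ 0 := by
    intro j h
    have := hMu j
    rw [h] at this
    have h1 : (0 : Fin n → ℤ) = Pi.single j 1 := by
      rw [← this]
      simp [Matrix.mulVec_zero]
    have := congrFun h1 j
    simp at this
  set c : Fin n → ℤ := fun j => u j ⬝ᵥ M.mulVec (u j) with hc
  have hcpos : ∀ j, 0 < c j := fun j => hpos _ (hu0 j)
  have key : ∀ w : Fin n → ℤ, w ⬝ᵥ M.mulVec w = 8 → ∀ j, w j * w j ≤ 8 * c j := by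
    intro w hw8 j
    have hwj : w ⬝ᵥ M.mulVec (u j) = w j := by
      rw [hMu j]
      simp [dotProduct_single]
    have hujw : u j ⬝ᵥ M.mulVec w = w j := by
      rw [dot_symm_int M hsymm]
      exact hwj
    set z : Fin n → ℤ := (c j) • w - (w j) • (u j) with hz
    have hzz : 0 ≤ z ⬝ᵥ M.mulVec z := by
      by_cases h : z = 0
      · rw [h]; simp [Matrix.mulVec_zero]
      · exact le_of_lt (hpos z h)
    have hexp : z ⬝ᵥ M.mulVec z = c j * c j * 8 - c j * (w j * w j) := by
      rw [hz]
      rw [sub_dotProduct, smul_dotProduct, smul_dotProduct,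
        Matrix.mulVec_sub, Matrix.mulVec_smul, Matrix.mulVec_smul,
        dotProduct_sub, dotProduct_sub,
        dotProduct_smul, dotProduct_smul,
        dotProduct_smul, dotProduct_smul]
      simp only [smul_eq_mul]
      rw [hw8, hwj, hujw]
      ring
    rw [hexp] at hzz
    nlinarith [hcpos j]
  have keybound : ∀ w : Fin n → ℤ, w ⬝ᵥ M.mulVec w = 8 → ∀ j,
      w j ∈ Set.Icc (-(8 * c j)) (8 * c j) := by
    intro w hw8 j
    have h1 := key w hw8 j
    have h2 := hcpos j
    constructor
    · nlinarith [sq_nonneg (w j + 1)]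
    · nlinarith [sq_nonneg (w j - 1)]
  have hbox : ({w : Fin n → ℤ | ∀ j, w j ∈ Set.Icc (-(8 * c j)) (8 * c j)}).Finite := by
    apply Set.Finite.subset (Set.Finite.pi (fun j => Set.finite_Icc (-(8 * c j)) (8 * c j)))
    intro w hw
    simp only [Set.mem_pi, Set.mem_univ, forall_true_left]
    intro j
    exact hw j
  apply Set.Finite.subset (hbox.image (fun w => (2:ℚ)⁻¹ • cv w))
  rintro x ⟨hxB, hx2⟩
  obtain ⟨w, hw⟩ := two_smul_int M hsymm hdet hB hxB
  have hw8 : w ⬝ᵥ M.mulVec w = 8 := by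
    have := q_self_cast M hsymm hw x hw
    rw [hx2] at this
    have h8 : ((w ⬝ᵥ M.mulVec w : ℤ) : ℚ) = 8 := by linarith
    exact_mod_cast h8
  refine ⟨w, fun j => keybound w hw8 j, ?_⟩
  show (2:ℚ)⁻¹ • cv w = x
  rw [← hw, smul_smul]
  norm_num

lemma odd_sub_odd (hsymm : M.IsSymm) (hdet : M.det = 1) (hB : IsEvenNeighbor M B)
    {x y : Fin n → ℚ} (hx : x ∈ B) (hy : y ∈ B)
    (hox : ¬ Intg x) (hoy : ¬ Intg y) : Intg (x - y) := by
  obtain ⟨w, hw⟩ := two_smul_int M hsymm hdet hB hx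
  obtain ⟨w', hw'⟩ := two_smul_int M hsymm hdet hB hy
  have h1 : ¬ ∀ i, (2:ℤ) ∣ w i := fun h => hox ((integral_iff hw).mpr h)
  have h2 : ¬ ∀ i, (2:ℤ) ∣ w' i := fun h => hoy ((integral_iff hw').mpr h)
  exact odd_diff_int M hsymm hdet hB hx hy hw hw' h1 h2

lemma q_expand_sub (hsymm : M.IsSymm) (x y : Fin n → ℚ) :
    qformQ M (x - y) (x - y) = qformQ M x x - 2 * qformQ M x y + qformQ M y y := by
  rw [q_sub_left, q_sub_right, q_sub_right, q_symm M hsymm y x]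
  ring

lemma q_expand_add (hsymm : M.IsSymm) (x y : Fin n → ℚ) :
    qformQ M (x + y) (x + y) = qformQ M x x + 2 * qformQ M x y + qformQ M y y := by
  rw [q_add_left, q_add_right, q_add_right, q_symm M hsymm y x]
  ring

/-- the main counting lemma: in any finite set of norm-2 vectors of `B` which is
closed under negation and root-subtraction, the number of non-integral elements
exceeds the number of integral ones by at most twice the dimension of the span. -/
lemma count_key (hsymm : M.IsSymm) (hdet : M.det = 1)
    (hpos : ∀ z : Fin n → ℤ, z ≠ 0 → 0 < z ⬝ᵥ M.mulVec z)
    (hB : IsEvenNeighbor M B) :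
    ∀ (m : ℕ) (S : Finset (Fin n → ℚ)),
    (∀ x ∈ S, x ∈ B ∧ qformQ M x x = 2) →
    (∀ x ∈ S, -x ∈ S) →
    (∀ u ∈ S, ∀ r ∈ S, qformQ M r u = 1 → r - u ∈ S) →
    (Module.finrank ℚ (Submodule.span ℚ (S : Set (Fin n → ℚ))) ≤ m) →
    (S.filter (fun x => ¬ Intg x)).card ≤ (S.filter (fun x => Intg x)).card + 2 * m := by
  classical
  intro m
  induction m with
  | zero =>
    intro S hprop hneg hclos hrank
    -- S must be empty
    have hS : S = ∅ := by
      by_contra hne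
      obtain ⟨x, hx⟩ := Finset.nonempty_of_ne_empty hne
      have hx0 : x ≠ 0 := by
        intro h
        have := (hprop x hx).2
        rw [h] at this
        simp [qformQ, zero_dotProduct] at this
      have hle : Submodule.span ℚ ({x} : Set (Fin n → ℚ)) ≤
          Submodule.span ℚ (S : Set (Fin n → ℚ)) := by
        apply Submodule.span_mono
        simp [hx]
      have h1 : 1 ≤ Module.finrank ℚ (Submodule.span ℚ (S : Set (Fin n → ℚ))) := by
        have := Submodule.finrank_mono hle
        rw [finrank_span_singleton hx0] at this
        exact this
      omega
    subst hS
    simp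
  | succ m ih =>
    intro S hprop hneg hclos hrank
    by_cases hodd : ∃ u ∈ S, ¬ Intg u
    swap
    · -- no odd elements at all
      push_neg at hodd
      have : S.filter (fun x => ¬ Intg x) = ∅ := by
        apply Finset.filter_false_of_mem
        intro x hx
        simp only [not_not]
        exact hodd x hx
      rw [this]
      simp
    obtain ⟨u, huS, huodd⟩ := hodd
    have huB := (hprop u huS).1
    have hu2 := (hprop u huS).2
    have hu0 : u ≠ 0 := by
      intro h
      rw [h] at hu2
      simp [qformQ, zero_dotProduct] at hu2
    -- possible values of the pairing with u
    have vals : ∀ x ∈ S, qformQ M x u = 0 ∨ qformQ M x u = 1 ∨ qformQ M x u = -1 ∨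
        x = u ∨ x = -u := by
      intro x hx
      have hxB := (hprop x hx).1
      have hx2 := (hprop x hx).2
      obtain ⟨k, hk⟩ := hB.2.1 x hxB u huB
      have hsub : qformQ M (x - u) (x - u) = 4 - 2 * (k:ℚ) := by
        rw [q_expand_sub M hsymm, hx2, hu2, hk]; ring
      have hadd : qformQ M (x + u) (x + u) = 4 + 2 * (k:ℚ) := by
        rw [q_expand_add M hsymm, hx2, hu2, hk]; ring
      have hsub0 : 0 ≤ qformQ M (x - u) (x - u) :=
        q_self_nonneg M hsymm hdet hpos hB (Submodule.sub_mem B hxB huB)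
      have hadd0 : 0 ≤ qformQ M (x + u) (x + u) :=
        q_self_nonneg M hsymm hdet hpos hB (Submodule.add_mem B hxB huB)
      have hkle : k ≤ 2 := by
        rw [hsub] at hsub0
        have : (k:ℚ) ≤ 2 := by linarith
        exact_mod_cast this
      have hkge : -2 ≤ k := by
        rw [hadd] at hadd0
        have : (-2:ℚ) ≤ (k:ℚ) := by linarith
        exact_mod_cast this
      interval_cases k
      · right; right; right; right
        have h0 : qformQ M (x + u) (x + u) = 0 := by rw [hadd]; norm_num
        have := q_self_zero M hsymm hdet hpos hB (Submodule.add_mem B hxB huB) h0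
        have : x = -u := by
          have h' : x + u = 0 := this
          linear_combination (norm := abel) h'
        exact this
      · right; right; left
        rw [hk]; norm_num
      · left; rw [hk]; norm_num
      · right; left; rw [hk]; norm_num
      · right; right; right; left
        have h0 : qformQ M (x - u) (x - u) = 0 := by rw [hsub]; norm_num
        have := q_self_zero M hsymm hdet hpos hB (Submodule.sub_mem B hxB huB) h0
        have : x = u := by
          have h' : x - u = 0 := this
          linear_combination (norm := abel) h'
        exact this
    -- the three parts of any subset
    set p0 : (Fin n → ℚ) → Prop := fun x => qformQ M x u = 0 with hp0
    set p1 : (Fin n → ℚ) → Prop := fun x => qformQ M x u = 1 ∨ qformQ M x u = -1 with hp1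
    set pu : (Fin n → ℚ) → Prop := fun x => x = u ∨ x = -u with hpu
    have hqu_u : qformQ M u u = 2 := hu2
    have hqu_neg : qformQ M (-u) u = -2 := by rw [q_neg_left, hu2]
    have excl_u : ∀ x, pu x → ¬ p0 x ∧ ¬ p1 x := by
      intro x hx
      rcases hx with rfl | rfl
      · constructor
        · intro h; rw [hp0] at h; rw [hqu_u] at h; norm_num at h
        · intro h; rcases h with h | h <;> rw [hqu_u] at h <;> norm_num at h
      · constructor
        · intro h; rw [hp0] at h; rw [hqu_neg] at h; norm_num at h
        · intro h; rcases h with h | h <;> rw [hqu_neg] at h <;> norm_num at h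
    have split3 : ∀ T : Finset (Fin n → ℚ), T ⊆ S →
        T.card = (T.filter p0).card + (T.filter p1).card + (T.filter pu).card := by
      intro T hTS
      have h1 := Finset.card_filter_add_card_filter_not (s := T) (p := p0)
      have h2 := Finset.card_filter_add_card_filter_not
        (s := T.filter (fun x => ¬ p0 x)) (p := p1)
      have he1 : (T.filter (fun x => ¬ p0 x)).filter p1 = T.filter p1 := by
        rw [Finset.filter_filter]
        apply Finset.filter_congr
        intro x hx
        constructor
        · intro h; exact h.2
        · intro h
          refine ⟨?_, h⟩
          intro h0
          rcases h with h | h <;> rw [hp0] at h0 <;> rw [h0] at h <;> norm_num at h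
      have he2 : (T.filter (fun x => ¬ p0 x)).filter (fun x => ¬ p1 x) = T.filter pu := by
        ext x
        simp only [Finset.mem_filter]
        constructor
        · rintro ⟨⟨hxT, hnp0⟩, hnp1⟩
          refine ⟨hxT, ?_⟩
          rcases vals x (hTS hxT) with h | h | h | h | h
          · exact absurd h hnp0
          · exact absurd (Or.inl h) hnp1
          · exact absurd (Or.inr h) hnp1
          · exact Or.inl h
          · exact Or.inr h
        · rintro ⟨hxT, hpux⟩
          have hx := excl_u x hpux
          exact ⟨⟨hxT, hx.1⟩, hx.2⟩
      rw [he1, he2] at h2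
      omega
    -- odd and even parts
    set O := S.filter (fun x => ¬ Intg x) with hO
    set E := S.filter (fun x => Intg x) with hE
    have hOS : O ⊆ S := Finset.filter_subset _ _
    have hES : E ⊆ S := Finset.filter_subset _ _
    have hsplitO := split3 O hOS
    have hsplitE := split3 E hES
    have hune : u ≠ -u := by
      intro h
      rw [← h] at hqu_neg
      rw [hqu_u] at hqu_neg
      norm_num at hqu_neg
    have hnegu_odd : ¬ Intg (-u) := fun hI => huodd (Intg_neg_iff.mp hI)
    have hOu : O.filter pu = {u, -u} := by
      ext x
      simp only [Finset.mem_filter, Finset.mem_insert, Finset.mem_singleton]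
      constructor
      · rintro ⟨_, h⟩
        exact h
      · rintro (rfl | rfl)
        · exact ⟨Finset.mem_filter.mpr ⟨huS, huodd⟩, Or.inl rfl⟩
        · exact ⟨Finset.mem_filter.mpr ⟨hneg u huS, hnegu_odd⟩, Or.inr rfl⟩
    have hOucard : (O.filter pu).card = 2 := by
      rw [hOu]
      rw [Finset.card_insert_of_notMem (by simpa using hune), Finset.card_singleton]
    have hEucard : (E.filter pu).card = 0 := by
      rw [Finset.card_eq_zero]
      rw [Finset.filter_eq_empty_iff]
      intro x hx
      have hIx : Intg x := (Finset.mem_filter.mp hx).2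
      rintro (rfl | rfl)
      · exact huodd hIx
      · exact hnegu_odd hIx
    -- the parity-flipping bijection on the p1 part
    set ψ : (Fin n → ℚ) → (Fin n → ℚ) := fun x => x - qformQ M x u • u with hψ
    have hmemS : ∀ x ∈ S, p1 x → ψ x ∈ S := by
      intro x hxS h1x
      rcases h1x with h | h
      · have h2 := hclos u huS x hxS h
        have : ψ x = x - u := by
          rw [show ψ x = x - qformQ M x u • u from rfl, h, one_smul]
        rwa [this]
      · have hxneg := hneg x hxS
        have hq : qformQ M (-x) u = 1 := by rw [q_neg_left, h]; ring
        have h2 := hclos u huS (-x) hxneg hq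
        have h3 := hneg _ h2
        have : ψ x = -(-x - u) := by
          rw [show ψ x = x - qformQ M x u • u from rfl, h, neg_smul, one_smul, sub_neg_eq_add]
          abel
        rwa [this]
    have hq_psi : ∀ x, p1 x → qformQ M (ψ x) u = - qformQ M x u := by
      intro x h1x
      rw [show ψ x = x - qformQ M x u • u from rfl, q_sub_left, q_smul_left, hqu_u]
      rcases h1x with h | h <;> rw [h] <;> ring
    have hp1_psi : ∀ x, p1 x → p1 (ψ x) := by
      intro x h1x
      have := hq_psi x h1x
      rcases h1x with h | h
      · right; rw [this, h]
      · left; rw [this, h]; ring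
    have hpsi_invol : ∀ x, p1 x → ψ (ψ x) = x := by
      intro x h1x
      have hq := hq_psi x h1x
      show ψ x - qformQ M (ψ x) u • u = x
      rw [hq, neg_smul, sub_neg_eq_add, show ψ x = x - qformQ M x u • u from rfl]
      abel
    have hdiff_pm : ∀ x, p1 x → x - ψ x = qformQ M x u • u := by
      intro x h1x
      rw [show ψ x = x - qformQ M x u • u from rfl]
      abel
    have hflip_oe : ∀ x ∈ S, p1 x → ¬ Intg x → Intg (ψ x) := by
      intro x hxS h1x hox
      have hxB := (hprop x hxS).1
      rcases h1x with h | h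
      · have : ψ x = x - u := by rw [show ψ x = x - qformQ M x u • u from rfl, h, one_smul]
        rw [this]
        exact odd_sub_odd M hsymm hdet hB hxB huB hox huodd
      · have : ψ x = x - (-u) := by
          rw [show ψ x = x - qformQ M x u • u from rfl, h, neg_smul, one_smul, sub_neg_eq_add]
        rw [this]
        exact odd_sub_odd M hsymm hdet hB hxB (Submodule.neg_mem B huB) hox hnegu_odd
    have hflip_eo : ∀ x ∈ S, p1 x → Intg x → ¬ Intg (ψ x) := by
      intro x hxS h1x hIx hIψ
      have hd : Intg (x - ψ x) := Intg_sub hIx hIψ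
      rw [hdiff_pm x h1x] at hd
      rcases h1x with h | h
      · rw [h, one_smul] at hd
        exact huodd hd
      · rw [h, neg_smul, one_smul] at hd
        exact hnegu_odd hd
    have hcard1 : (O.filter p1).card = (E.filter p1).card := by
      apply Finset.card_bij' (fun x _ => ψ x) (fun x _ => ψ x)
      · intro a ha
        obtain ⟨haO, h1a⟩ := Finset.mem_filter.mp ha
        obtain ⟨haS, hodda⟩ := Finset.mem_filter.mp haO
        refine Finset.mem_filter.mpr ⟨Finset.mem_filter.mpr ⟨hmemS a haS h1a, ?_⟩, hp1_psi a h1a⟩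
        exact hflip_oe a haS h1a hodda
      · intro b hb
        obtain ⟨hbE, h1b⟩ := Finset.mem_filter.mp hb
        obtain ⟨hbS, hIb⟩ := Finset.mem_filter.mp hbE
        refine Finset.mem_filter.mpr ⟨Finset.mem_filter.mpr ⟨hmemS b hbS h1b, ?_⟩, hp1_psi b h1b⟩
        exact hflip_eo b hbS h1b hIb
      · intro a ha
        exact hpsi_invol a (Finset.mem_filter.mp ha).2
      · intro b hb
        exact hpsi_invol b (Finset.mem_filter.mp hb).2
    -- induction hypothesis on the orthogonal part
    set S0 := S.filter p0 with hS0
    have hprop0 : ∀ x ∈ S0, x ∈ B ∧ qformQ M x x = 2 :=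
      fun x hx => hprop x (Finset.mem_filter.mp hx).1
    have hneg0 : ∀ x ∈ S0, -x ∈ S0 := by
      intro x hx
      obtain ⟨hxS, h0x⟩ := Finset.mem_filter.mp hx
      refine Finset.mem_filter.mpr ⟨hneg x hxS, ?_⟩
      show qformQ M (-x) u = 0
      rw [q_neg_left]
      rw [hp0] at h0x
      rw [h0x]
      ring
    have hclos0 : ∀ v ∈ S0, ∀ r ∈ S0, qformQ M r v = 1 → r - v ∈ S0 := by
      intro v hv r hr hrv
      obtain ⟨hvS, h0v⟩ := Finset.mem_filter.mp hv
      obtain ⟨hrS, h0r⟩ := Finset.mem_filter.mp hr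
      refine Finset.mem_filter.mpr ⟨hclos v hvS r hrS hrv, ?_⟩
      show qformQ M (r - v) u = 0
      rw [q_sub_left]
      rw [hp0] at h0v h0r
      rw [h0v, h0r]
      ring
    have hrank0 : Module.finrank ℚ (Submodule.span ℚ (S0 : Set (Fin n → ℚ))) ≤ m := by
      let F : (Fin n → ℚ) →ₗ[ℚ] ℚ :=
        { toFun := fun y => qformQ M y u
          map_add' := fun a b => q_add_left M a b u
          map_smul' := fun c a => by simpa using q_smul_left M c a u }
      have hker : Submodule.span ℚ (S0 : Set (Fin n → ℚ)) ≤ LinearMap.ker F := by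
        rw [Submodule.span_le]
        intro x hx
        have hx' : x ∈ S0 := hx
        have h0x : p0 x := (Finset.mem_filter.mp hx').2
        rw [hp0] at h0x
        exact LinearMap.mem_ker.mpr h0x
      have hunotin : u ∉ Submodule.span ℚ (S0 : Set (Fin n → ℚ)) := by
        intro hu
        have : F u = 0 := LinearMap.mem_ker.mp (hker hu)
        have : qformQ M u u = 0 := this
        rw [hqu_u] at this
        norm_num at this
      have hlt : Submodule.span ℚ (S0 : Set (Fin n → ℚ)) <
          Submodule.span ℚ (S : Set (Fin n → ℚ)) := by
        refine lt_of_le_of_ne (Submodule.span_mono ?_) ?_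
        · exact_mod_cast Finset.filter_subset _ _
        · intro heq
          apply hunotin
          rw [heq]
          exact Submodule.subset_span huS
      have := Submodule.finrank_lt_finrank_of_lt hlt
      omega
    have hIH := ih S0 hprop0 hneg0 hclos0 hrank0
    -- relate the nested filters
    have hcomm0O : O.filter p0 = S0.filter (fun x => ¬ Intg x) := by
      rw [hO, hS0]
      ext x
      simp only [Finset.mem_filter]
      tauto
    have hcomm0E : E.filter p0 = S0.filter (fun x => Intg x) := by
      rw [hE, hS0]
      ext x
      simp only [Finset.mem_filter]
      tauto
    rw [← hcomm0O, ← hcomm0E] at hIH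
    show O.card ≤ E.card + 2 * (m + 1)
    omega

end Neighbor

end NbrAux

/-- Let `A` be an odd positive definite unimodular integral lattice of rank 24
with no vectors of norm 1, and let `h₁ ≤ h₂` be the Coxeter numbers of its two
even neighbors.  Then `h₂ ≤ 2h₁ + 2`. -/
theorem rank24_odd_unimodular_neighbor_coxeter_bound
    (M : Matrix (Fin 24) (Fin 24) ℤ)
    (hsymm : M.IsSymm)
    (hpos : ∀ x : Fin 24 → ℤ, x ≠ 0 → 0 < x ⬝ᵥ M.mulVec x)
    (hdet : M.det = 1)
    (hodd : ∃ x : Fin 24 → ℤ, ¬ (2 : ℤ) ∣ x ⬝ᵥ M.mulVec x)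
    (hno1 : ∀ x : Fin 24 → ℤ, x ⬝ᵥ M.mulVec x ≠ 1)
    (B₁ B₂ : Submodule ℤ (Fin 24 → ℚ))
    (hB₁ : IsEvenNeighbor M B₁) (hB₂ : IsEvenNeighbor M B₂) (hne : B₁ ≠ B₂)
    (h₁ h₂ : ℕ)
    (hh₁ : Nat.card {x : Fin 24 → ℚ // x ∈ B₁ ∧ qformQ M x x = 2} = 24 * h₁)
    (hh₂ : Nat.card {x : Fin 24 → ℚ // x ∈ B₂ ∧ qformQ M x x = 2} = 24 * h₂)
    (hle : h₁ ≤ h₂) :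
    h₂ ≤ 2 * h₁ + 2 := by
  classical
  have hfin2 : {x : Fin 24 → ℚ | x ∈ B₂ ∧ qformQ M x x = 2}.Finite :=
    NbrAux.roots_finite M hsymm hdet hpos hB₂
  have hfin1 : {x : Fin 24 → ℚ | x ∈ B₁ ∧ qformQ M x x = 2}.Finite :=
    NbrAux.roots_finite M hsymm hdet hpos hB₁
  set S := hfin2.toFinset with hSdef
  have hcard2 : S.card = 24 * h₂ := by
    rw [hSdef]
    rw [← hh₂]
    exact (Nat.card_eq_card_finite_toFinset hfin2).symm
  have hpropS : ∀ x ∈ S, x ∈ B₂ ∧ qformQ M x x = 2 := by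
    intro x hx
    rw [hSdef, Set.Finite.mem_toFinset] at hx
    exact hx
  have hnegS : ∀ x ∈ S, -x ∈ S := by
    intro x hx
    obtain ⟨hxB, hx2⟩ := hpropS x hx
    rw [hSdef, Set.Finite.mem_toFinset]
    refine ⟨Submodule.neg_mem B₂ hxB, ?_⟩
    rw [NbrAux.q_neg_left, NbrAux.q_neg_right, hx2]
    ring
  have hclosS : ∀ u ∈ S, ∀ r ∈ S, qformQ M r u = 1 → r - u ∈ S := by
    intro u hu r hr hru
    obtain ⟨huB, hu2⟩ := hpropS u hu
    obtain ⟨hrB, hr2⟩ := hpropS r hr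
    rw [hSdef, Set.Finite.mem_toFinset]
    refine ⟨Submodule.sub_mem B₂ hrB huB, ?_⟩
    rw [NbrAux.q_expand_sub M hsymm, hr2, hu2, hru]
    ring
  have hrankS : Module.finrank ℚ (Submodule.span ℚ (S : Set (Fin 24 → ℚ))) ≤ 24 := by
    have h1 := Submodule.finrank_le (Submodule.span ℚ (S : Set (Fin 24 → ℚ)))
    have h2 : Module.finrank ℚ (Fin 24 → ℚ) = 24 := by
      simp [Module.finrank_pi]
    omega
  have hkey := NbrAux.count_key M hsymm hdet hpos hB₂ 24 S hpropS hnegS hclosS hrankS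
  have hOE := Finset.card_filter_add_card_filter_not
    (s := S) (p := fun x => NbrAux.Intg x)
  have hEsub : S.filter (fun x => NbrAux.Intg x) ⊆ hfin1.toFinset := by
    intro x hx
    obtain ⟨hxS, hIx⟩ := Finset.mem_filter.mp hx
    obtain ⟨hxB, hx2⟩ := hpropS x hxS
    obtain ⟨z, rfl⟩ := hIx
    rw [Set.Finite.mem_toFinset]
    refine ⟨?_, hx2⟩
    apply hB₁.1
    have : ((z ⬝ᵥ M.mulVec z : ℤ) : ℚ) = 2 := by
      rw [← NbrAux.q_cast M z z]
      exact hx2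
    have hz2 : z ⬝ᵥ M.mulVec z = 2 := by exact_mod_cast this
    rw [hz2]
  have hE1 : (S.filter (fun x => NbrAux.Intg x)).card ≤ 24 * h₁ := by
    have := Finset.card_le_card hEsub
    rw [← hh₁]
    have heq : hfin1.toFinset.card =
        Nat.card {x : Fin 24 → ℚ // x ∈ B₁ ∧ qformQ M x x = 2} :=
      (Nat.card_eq_card_finite_toFinset hfin1).symm
    omega
  omega
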